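/- Let b ≥ 2 and let G be a graph of order n ≥ 7 with δ(G) ≥ 1 whose complement has at most n - 1 edges. Then G is [1,b]-covered: every edge of G lies in a spanning subgraph F with 1 ≤ d_F(v) ≤ b for all vertices v. -/

import Mathlib

open SimpleGraph Finset
open scoped Classical

/-- There is an [a,b]-factor of G (a spanning subgraph F with a ≤ d_F(v) ≤ b for all v)
containing the edge uv. -/
def HasABFactorThrough {V : Type*} [Fintype V] (G : SimpleGraph V) (a b : ℕ)
    (u v : V) : Prop :=
  ∃ F : SimpleGraph V, F ≤ G ∧ F.Adj u v ∧
    ∀ w : V, a ≤ (F.neighborSet w).ncard ∧ (F.neighborSet w).ncard ≤ b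

/-- G is [a,b]-covered: every edge of G lies in some [a,b]-factor. -/
def IsABCovered {V : Type*} [Fintype V] (G : SimpleGraph V) (a b : ℕ) : Prop :=
  ∀ u v : V, G.Adj u v → HasABFactorThrough G a b u v



section Aux
variable {V : Type*} [Fintype V] [DecidableEq V]

/-- A finite set closed under a fixed-point-free involution has even cardinality. -/
lemma even_card_of_fpf_involution (C : Finset V) :
    ∀ (p : V → V), (∀ x ∈ C, p x ∈ C) → (∀ x ∈ C, p (p x) = x) →
    (∀ x ∈ C, p x ≠ x) → Even C.card := by
  induction C using Finset.strongInduction with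
  | _ C ih =>
    intro p hcl hinv hne
    rcases C.eq_empty_or_nonempty with rfl | ⟨x, hx⟩
    · simp
    · have hpx : p x ∈ C := hcl x hx
      have hxpx : p x ≠ x := hne x hx
      have h1 : p x ∈ C.erase x := Finset.mem_erase.mpr ⟨hxpx, hpx⟩
      set C' := (C.erase x).erase (p x) with hC'
      have hsub : C' ⊂ C := by
        refine Finset.ssubset_of_subset_of_ssubset ?_ (Finset.erase_ssubset hx)
        exact Finset.erase_subset _ _
      have hmemC' : ∀ z, z ∈ C' ↔ z ∈ C ∧ z ≠ x ∧ z ≠ p x := by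
        intro z
        simp only [hC', Finset.mem_erase]
        tauto
      have hcl' : ∀ z ∈ C', p z ∈ C' := by
        intro z hz
        rw [hmemC'] at hz ⊢
        obtain ⟨hzC, hzx, hzpx⟩ := hz
        refine ⟨hcl z hzC, ?_, ?_⟩
        · intro h; apply hzpx; rw [← hinv z hzC, h]
        · intro h
          apply hzx
          have := congrArg p h
          rwa [hinv z hzC, hinv x hx] at this
      have heven := ih C' hsub p hcl'
        (fun z hz => hinv z ((hmemC' z).mp hz).1)
        (fun z hz => hne z ((hmemC' z).mp hz).1)
      have hcard : C.card = C'.card + 2 := by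
        rw [hC', Finset.card_erase_of_mem h1, Finset.card_erase_of_mem hx]
        have h2 : 2 ≤ C.card := Finset.one_lt_card.mpr ⟨p x, hpx, x, hx, hxpx⟩
        omega
      rw [hcard]
      obtain ⟨m, hm⟩ := heven
      exact ⟨m + 1, by omega⟩

/-- Greedy extension to a maximal matching containing a given edge. -/
lemma exists_maximal_matching (G : SimpleGraph V) {u v : V} (huv : G.Adj u v) :
    ∃ (C : Finset V) (p : V → V), u ∈ C ∧ p u = v ∧
      (∀ x ∈ C, p x ∈ C) ∧ (∀ x ∈ C, p (p x) = x) ∧ (∀ x ∈ C, G.Adj x (p x)) ∧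
      (∀ x y, x ∉ C → y ∉ C → ¬G.Adj x y) := by
  have key : ∀ (m : ℕ) (C : Finset V) (p : V → V), u ∈ C → p u = v →
      (∀ x ∈ C, p x ∈ C) → (∀ x ∈ C, p (p x) = x) → (∀ x ∈ C, G.Adj x (p x)) →
      Fintype.card V - C.card ≤ m →
      ∃ (C' : Finset V) (p' : V → V), u ∈ C' ∧ p' u = v ∧
        (∀ x ∈ C', p' x ∈ C') ∧ (∀ x ∈ C', p' (p' x) = x) ∧ (∀ x ∈ C', G.Adj x (p' x)) ∧
        (∀ x y, x ∉ C' → y ∉ C' → ¬G.Adj x y) := by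
    intro m
    induction m with
    | zero =>
      intro C p huC hpu hcl hinv hadj hm
      refine ⟨C, p, huC, hpu, hcl, hinv, hadj, ?_⟩
      have hC : C = Finset.univ := by
        apply Finset.eq_univ_of_card
        have := Finset.card_le_univ C
        omega
      intro x y hx _ _
      exact hx (hC ▸ Finset.mem_univ x)
    | succ m ihm =>
      intro C p huC hpu hcl hinv hadj hm
      by_cases hind : ∀ x y, x ∉ C → y ∉ C → ¬G.Adj x y
      · exact ⟨C, p, huC, hpu, hcl, hinv, hadj, hind⟩
      · push_neg at hind
        obtain ⟨x, y, hx, hy, hxy⟩ := hind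
        have hne : x ≠ y := hxy.ne
        set C' := insert x (insert y C) with hC'
        set p' := fun z => if z = x then y else if z = y then x else p z with hp'
        have hx' : x ∉ insert y C := by simp [hne, hx]
        have hcard : C'.card = C.card + 2 := by
          rw [hC', Finset.card_insert_of_notMem hx', Finset.card_insert_of_notMem hy]
        have hCsub : C ⊆ C' := by intro z hz; simp [hC', hz]
        have hmem : ∀ z ∈ C, z ≠ x ∧ z ≠ y := by
          intro z hz
          constructor <;> rintro rfl <;> [exact hx hz; exact hy hz]
        have hp'C : ∀ z ∈ C, p' z = p z := by
          intro z hz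
          obtain ⟨h1, h2⟩ := hmem z hz
          simp [hp', h1, h2]
        have hp'x : p' x = y := by simp [hp']
        have hp'y : p' y = x := by simp [hp', hne.symm]
        have hmemC' : ∀ z, z ∈ C' ↔ z = x ∨ z = y ∨ z ∈ C := by
          intro z; simp [hC']
        apply ihm C' p'
        · exact hCsub huC
        · rw [hp'C u huC, hpu]
        · intro z hz
          rcases (hmemC' z).mp hz with rfl | rfl | hz'
          · rw [hp'x]; exact (hmemC' y).mpr (Or.inr (Or.inl rfl))
          · rw [hp'y]; exact (hmemC' x).mpr (Or.inl rfl)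
          · rw [hp'C z hz']; exact hCsub (hcl z hz')
        · intro z hz
          rcases (hmemC' z).mp hz with rfl | rfl | hz'
          · rw [hp'x, hp'y]
          · rw [hp'y, hp'x]
          · rw [hp'C z hz', hp'C (p z) (hcl z hz')]; exact hinv z hz'
        · intro z hz
          rcases (hmemC' z).mp hz with rfl | rfl | hz'
          · rw [hp'x]; exact hxy
          · rw [hp'y]; exact hxy.symm
          · rw [hp'C z hz']; exact hadj z hz'
        · omega
  exact key (Fintype.card V) {u, v} (fun z => if z = u then v else if z = v then u else z)
    (by simp) (by simp)
    (by
      intro x hxm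
      simp only [Finset.mem_insert, Finset.mem_singleton] at hxm
      rcases hxm with rfl | rfl
      · simp [huv.ne]
      · simp [huv.ne'])
    (by
      intro x hxm
      simp only [Finset.mem_insert, Finset.mem_singleton] at hxm
      rcases hxm with rfl | rfl
      · simp [huv.ne, huv.ne']
      · by_cases h : x = u
        · subst h; simp
        · simp [h, huv.ne'])
    (by
      intro x hxm
      simp only [Finset.mem_insert, Finset.mem_singleton] at hxm
      rcases hxm with rfl | rfl
      · simpa [huv.ne] using huv
      · by_cases h : x = u
        · subst h; simpa using huv
        · simpa [h] using huv.symm)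
    (Nat.sub_le _ _)

end Aux



section Count
variable {V : Type*} [Fintype V] [DecidableEq V]

/-- The pairs (w, x) with w ∈ A and x a neighbor of w outside A inject into the
edges of H that are not inside A. -/
lemma sum_sdiff_card_add_filter_le (H : SimpleGraph V) [DecidableRel H.Adj] (A : Finset V) :
    (∑ w ∈ A, ((H.neighborFinset w) \ A).card) +
      (H.edgeFinset.filter fun e => ∀ x ∈ e, x ∈ A).card ≤ H.edgeFinset.card := by
  set Ein := H.edgeFinset.filter (fun e => ∀ x ∈ e, x ∈ A) with hEin
  have hsub : Ein ⊆ H.edgeFinset := Finset.filter_subset _ _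
  have hcard : (∑ w ∈ A, ((H.neighborFinset w) \ A).card) ≤ (H.edgeFinset \ Ein).card := by
    rw [← Finset.card_sigma]
    apply Finset.card_le_card_of_injOn (fun z => s(z.1, z.2))
    · rintro ⟨w, x⟩ hz
      simp only [Finset.coe_sigma, Set.mem_sigma_iff, Finset.mem_coe, Finset.mem_sigma, Finset.mem_sdiff, SimpleGraph.mem_neighborFinset] at hz
      obtain ⟨hw, hadj, hxA⟩ := hz
      simp only [Finset.mem_coe, Finset.mem_sdiff, SimpleGraph.mem_edgeFinset, SimpleGraph.mem_edgeSet,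
        hEin, Finset.mem_filter]
      refine ⟨hadj, ?_⟩
      rintro ⟨-, hall⟩
      exact hxA (hall x (by simp [Sym2.mem_iff]))
    · rintro ⟨w, x⟩ hz ⟨w', x'⟩ hz' h
      simp only [Finset.coe_sigma, Set.mem_sigma_iff, Finset.mem_coe, Finset.mem_sigma,
        Finset.mem_sdiff, SimpleGraph.mem_neighborFinset] at hz hz'
      simp only [Sym2.eq_iff] at h
      rcases h with ⟨rfl, rfl⟩ | ⟨rfl, rfl⟩
      · rfl
      · exact absurd hz'.1 hz.2.2
  have h1 : (H.edgeFinset \ Ein).card = H.edgeFinset.card - Ein.card := Finset.card_sdiff_of_subset hsub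
  have h2 := Finset.card_le_card hsub
  omega

/-- A clique on A gives at least |A|(|A|-1)/2 edges inside A (doubled form). -/
lemma clique_mul_le_two_filter (H : SimpleGraph V) [DecidableRel H.Adj] (A : Finset V)
    (hcl : ∀ x ∈ A, ∀ y ∈ A, x ≠ y → H.Adj x y) :
    A.card * (A.card - 1) ≤ 2 * (H.edgeFinset.filter fun e => ∀ x ∈ e, x ∈ A).card := by
  set Ein := H.edgeFinset.filter (fun e => ∀ x ∈ e, x ∈ A) with hEin
  set D := A.sigma (fun w => A.erase w) with hD
  have h1 : D.card = A.card * (A.card - 1) := by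
    rw [hD, Finset.card_sigma]
    rw [Finset.sum_congr rfl (fun w hw => Finset.card_erase_of_mem hw)]
    simp [mul_comm]
  have hfib : ∀ e ∈ D.image (fun z => s(z.1, z.2)),
      (D.filter fun z => s(z.1, z.2) = e).card ≤ 2 := by
    intro e _
    induction e using Sym2.ind with
    | _ x y =>
      refine le_trans (Finset.card_le_card (t := {(⟨x, y⟩ : Σ _ : V, V), ⟨y, x⟩}) ?_) ?_
      · rintro ⟨w, z⟩ hwz
        simp only [Finset.mem_filter, Sym2.eq_iff] at hwz
        rcases hwz.2 with ⟨rfl, rfl⟩ | ⟨rfl, rfl⟩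
        · simp
        · simp
      · exact le_trans (Finset.card_insert_le _ _) (by simp)
  have h2 : D.card ≤ 2 * (D.image (fun z => s(z.1, z.2))).card :=
    Finset.card_le_mul_card_image _ 2 hfib
  have h3 : D.image (fun z => s(z.1, z.2)) ⊆ Ein := by
    intro e he
    obtain ⟨⟨w, z⟩, hwz, rfl⟩ := Finset.mem_image.mp he
    simp only [hD, Finset.mem_sigma, Finset.mem_erase] at hwz
    obtain ⟨hw, hzw, hz⟩ := hwz
    have hadj : H.Adj w z := hcl w hw z hz (Ne.symm hzw)
    simp only [hEin, Finset.mem_filter, SimpleGraph.mem_edgeFinset, SimpleGraph.mem_edgeSet]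
    refine ⟨hadj, ?_⟩
    intro t ht
    rcases Sym2.mem_iff.mp ht with rfl | rfl
    · exact hw
    · exact hz
  calc A.card * (A.card - 1) = D.card := h1.symm
    _ ≤ 2 * (D.image (fun z => s(z.1, z.2))).card := h2
    _ ≤ 2 * Ein.card := by
        exact Nat.mul_le_mul_left 2 (Finset.card_le_card h3)

end Count

lemma clique_mul_le_two_edge {V : Type*} [Fintype V] [DecidableEq V]
    (H : SimpleGraph V) [DecidableRel H.Adj] (A : Finset V)
    (hcl : ∀ x ∈ A, ∀ y ∈ A, x ≠ y → H.Adj x y) :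
    A.card * (A.card - 1) ≤ 2 * H.edgeFinset.card := by
  refine le_trans (clique_mul_le_two_filter H A hcl) ?_
  have := Finset.card_le_card
    (Finset.filter_subset (fun e => ∀ x ∈ e, x ∈ A) H.edgeFinset)
  omega


lemma final_arith (n a2 k2 m S cross E EA : ℕ)
    (hn : 7 ≤ n)
    (hsumdeg : (a2 + 2) * n ≤ S + (a2 + 2) * (a2 + 2))
    (hS : S = (a2 + 2) * (a2 + 1) + cross)
    (hpair : cross + EA ≤ E)
    (hcliq : (a2 + 2) * (a2 + 1) ≤ 2 * EA)
    (hcliqU : (k2 + 2) * (k2 + 1) ≤ 2 * E)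
    (hak : a2 + 2 ≤ k2 + 2)
    (hkn : (k2 + 2) + (m + m) = n)
    (haN : a2 + 2 ≤ n)
    (hcomp : E ≤ n - 1) : False := by
  have hE1 : E + 1 ≤ n := by omega
  have C1 : 2 * (a2 + 2) * n + (a2 + 2) ≤ 3 * ((a2 + 2) * (a2 + 2)) + 2 * E := by
    nlinarith
  have hup : a2 ≤ 2 := by
    by_contra h
    push_neg at h
    have h3n : 3 * n ≤ a2 * n := Nat.mul_le_mul_right n (by omega)
    nlinarith
  interval_cases a2
  · omega
  · omega
  · have hn7 : n = 7 := by omega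
    have hE6 : E = 6 := by omega
    have hklt : (k2 + 2) * (k2 + 1) ≤ 12 := le_trans hcliqU (by omega)
    have hk2le : k2 ≤ 2 := by nlinarith
    omega

/-- If b ≥ 2, n ≥ 7, δ(G) ≥ 1 and e(Ḡ) ≤ n - 1, then G is [1,b]-covered. -/
theorem oneBCovered_of_complement_small {n b : ℕ} (hb : 2 ≤ b) (hn : 7 ≤ n)
    (G : SimpleGraph (Fin n)) [DecidableRel G.Adj] (hδ : 1 ≤ G.minDegree)
    (hcomp : Gᶜ.edgeFinset.card ≤ n - 1) :
    IsABCovered G 1 b := by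
  intro u v huv
  haveI : Nonempty (Fin n) := ⟨⟨0, by omega⟩⟩
  obtain ⟨C, p, huC, hpu, hCl, hInv, hAdjp, hInd⟩ := exists_maximal_matching G huv
  set U : Finset (Fin n) := Cᶜ with hUdef
  have hclU : ∀ x ∈ U, ∀ y ∈ U, x ≠ y → Gᶜ.Adj x y := by
    intro x hx y hy hxy
    rw [SimpleGraph.compl_adj]
    exact ⟨hxy, hInd x y (Finset.mem_compl.mp hx) (Finset.mem_compl.mp hy)⟩
  have hCeven : Even C.card :=
    even_card_of_fpf_involution C p hCl hInv (fun x hx => (hAdjp x hx).ne')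
  have hcardV : Fintype.card (Fin n) = n := Fintype.card_fin n
  -- The Hall condition for the unmatched vertices.
  have hallCond : ∀ A : Finset (Fin n), A ⊆ U →
      A.card ≤ (A.biUnion (fun w => G.neighborFinset w)).card := by
    intro A hAU
    by_contra hcon
    push_neg at hcon
    have hdegG : ∀ w ∈ A, G.degree w < A.card := by
      intro w hw
      exact lt_of_le_of_lt
        (Finset.card_le_card (Finset.subset_biUnion_of_mem (fun w => G.neighborFinset w) hw)) hcon
    have hdeg1 : ∀ w ∈ A, 1 ≤ G.degree w :=
      fun w _ => le_trans hδ (G.minDegree_le_degree w)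
    have ha2' : 2 ≤ A.card := by
      obtain ⟨w, hw⟩ := Finset.card_pos.mp (show 0 < A.card from by omega)
      have := hdeg1 w hw; have := hdegG w hw; omega
    have hdegc : ∀ w ∈ A, n ≤ Gᶜ.degree w + A.card := by
      intro w hw
      have h1 : Gᶜ.degree w = Fintype.card (Fin n) - 1 - G.degree w :=
        SimpleGraph.degree_compl G w
      have h2 := G.degree_lt_card_verts w
      have h3 := hdegG w hw
      omega
    have hsumdeg : A.card * n ≤ (∑ w ∈ A, Gᶜ.degree w) + A.card * A.card := by
      calc A.card * n = ∑ _w ∈ A, n := by rw [Finset.sum_const, smul_eq_mul]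
        _ ≤ ∑ w ∈ A, (Gᶜ.degree w + A.card) := Finset.sum_le_sum hdegc
        _ = (∑ w ∈ A, Gᶜ.degree w) + A.card * A.card := by
            rw [Finset.sum_add_distrib, Finset.sum_const, smul_eq_mul]
    have hclA : ∀ x ∈ A, ∀ y ∈ A, x ≠ y → Gᶜ.Adj x y :=
      fun x hx y hy => hclU x (hAU hx) y (hAU hy)
    have hinter : ∀ w ∈ A, (Gᶜ.neighborFinset w ∩ A) = A.erase w := by
      intro w hw; ext x
      simp only [Finset.mem_inter, SimpleGraph.mem_neighborFinset, Finset.mem_erase]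
      constructor
      · rintro ⟨hadj, hxA⟩; exact ⟨hadj.ne', hxA⟩
      · rintro ⟨hxw, hxA⟩; exact ⟨hclA w hw x hxA (Ne.symm hxw), hxA⟩
    have hdegsplit : ∀ w ∈ A,
        Gᶜ.degree w = (A.card - 1) + (Gᶜ.neighborFinset w \ A).card := by
      intro w hw
      have hsplit := Finset.card_inter_add_card_sdiff (Gᶜ.neighborFinset w) A
      rw [hinter w hw, Finset.card_erase_of_mem hw] at hsplit
      have hdef : Gᶜ.degree w = (Gᶜ.neighborFinset w).card := rfl
      omega
    have hS : (∑ w ∈ A, Gᶜ.degree w)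
        = A.card * (A.card - 1) + ∑ w ∈ A, (Gᶜ.neighborFinset w \ A).card := by
      rw [Finset.sum_congr rfl hdegsplit, Finset.sum_add_distrib, Finset.sum_const,
        smul_eq_mul]
    have hpair := sum_sdiff_card_add_filter_le Gᶜ A
    have hcliq := clique_mul_le_two_filter Gᶜ A hclA
    have hcliqU := clique_mul_le_two_edge Gᶜ U hclU
    have hak : A.card ≤ U.card := Finset.card_le_card hAU
    have hCle : C.card ≤ n := by
      have := Finset.card_le_univ C; omega
    have hkn : U.card + C.card = n := by
      rw [hUdef, Finset.card_compl]; omega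
    obtain ⟨m, hm⟩ := hCeven
    have haN : A.card ≤ n := by
      have := Finset.card_le_univ A; omega
    obtain ⟨a2, ha⟩ : ∃ a2, A.card = a2 + 2 := ⟨A.card - 2, by omega⟩
    obtain ⟨k2, hk⟩ : ∃ k2, U.card = k2 + 2 := ⟨U.card - 2, by omega⟩
    have e1 : A.card - 1 = a2 + 1 := by omega
    have e2 : U.card - 1 = k2 + 1 := by omega
    rw [e1, ha] at hS hcliq
    rw [ha] at hsumdeg hak haN
    rw [e2, hk] at hcliqU
    rw [hk] at hkn hak
    obtain ⟨S, hSdef⟩ : ∃ S, (∑ w ∈ A, Gᶜ.degree w) = S := ⟨_, rfl⟩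
    obtain ⟨cross, hcrossdef⟩ :
        ∃ c, (∑ w ∈ A, (Gᶜ.neighborFinset w \ A).card) = c := ⟨_, rfl⟩
    obtain ⟨E, hEdef⟩ : ∃ E, Gᶜ.edgeFinset.card = E := ⟨_, rfl⟩
    rw [hSdef, hcrossdef] at hS
    rw [hSdef] at hsumdeg
    rw [hcrossdef, hEdef] at hpair
    rw [hEdef] at hcomp hcliqU
    obtain ⟨EA, hpair', hcliq'⟩ :
        ∃ x, cross + x ≤ E ∧ (a2 + 2) * (a2 + 1) ≤ 2 * x := ⟨_, hpair, hcliq⟩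
    rw [hm] at hkn
    exact final_arith n a2 k2 m S cross E EA hn hsumdeg hS hpair' hcliq' hcliqU hak hkn haN hcomp
  -- Hall's theorem gives an injective system of partners for unmatched vertices.
  have hallS : ∀ s : Finset ↥(U : Finset (Fin n)),
      s.card ≤ (s.biUnion fun w => G.neighborFinset ↑w).card := by
    intro s
    have h1 : (s.image (Subtype.val)).card = s.card :=
      Finset.card_image_of_injective _ Subtype.val_injective
    have h2 : (s.biUnion fun w => G.neighborFinset ↑w)
        = (s.image Subtype.val).biUnion (fun w => G.neighborFinset w) := by
      ext x
      simp only [Finset.mem_biUnion, Finset.mem_image]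
      constructor
      · rintro ⟨w, hw, hx⟩; exact ⟨↑w, ⟨w, hw, rfl⟩, hx⟩
      · rintro ⟨y, ⟨w, hw, rfl⟩, hx⟩; exact ⟨w, hw, hx⟩
    rw [← h1, h2]
    refine hallCond _ ?_
    intro x hx
    obtain ⟨w, _, rfl⟩ := Finset.mem_image.mp hx
    exact w.2
  obtain ⟨f, hfinj, hf⟩ :=
    (Finset.all_card_le_biUnion_card_iff_exists_injective
      (fun (w : ↥(U : Finset (Fin n))) => G.neighborFinset ↑w)).mp hallS
  set g : Fin n → Fin n := fun x => if h : x ∈ U then f ⟨x, h⟩ else x with hgdef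
  have hgAdj : ∀ x, x ∈ U → G.Adj x (g x) := by
    intro x hx
    have := hf ⟨x, hx⟩
    rw [SimpleGraph.mem_neighborFinset] at this
    simpa [hgdef, hx] using this
  have hgInj : ∀ x y, x ∈ U → y ∈ U → g x = g y → x = y := by
    intro x y hx hy hxy
    simp only [hgdef, hx, hy, dif_pos] at hxy
    exact congrArg Subtype.val (hfinj hxy)
  set F : SimpleGraph (Fin n) :=
    SimpleGraph.fromRel (fun x y => (x ∈ C ∧ p x = y) ∨ (x ∈ U ∧ g x = y)) with hFdef
  refine ⟨F, ?_, ?_, ?_⟩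
  · intro x y hxy
    rw [hFdef, SimpleGraph.fromRel_adj] at hxy
    obtain ⟨hne, h | h⟩ := hxy
    · rcases h with ⟨hc, rfl⟩ | ⟨hu, rfl⟩
      · exact hAdjp x hc
      · exact hgAdj x hu
    · rcases h with ⟨hc, hpy⟩ | ⟨hu, hgy⟩
      · rw [← hpy]; exact (hAdjp y hc).symm
      · rw [← hgy]; exact (hgAdj y hu).symm
  · rw [hFdef, SimpleGraph.fromRel_adj]
    exact ⟨huv.ne, Or.inl (Or.inl ⟨huC, hpu⟩)⟩
  · intro w
    by_cases hw : w ∈ C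
    · have hlow : F.Adj w (p w) := by
        rw [hFdef, SimpleGraph.fromRel_adj]
        exact ⟨(hAdjp w hw).ne, Or.inl (Or.inl ⟨hw, rfl⟩)⟩
      have h1le : 1 ≤ (F.neighborSet w).ncard :=
        (Set.ncard_pos (Set.toFinite _)).mpr ⟨p w, hlow⟩
      set Sw : Set (Fin n) := {y | y ∈ U ∧ g y = w} with hSwdef
      have hsub : F.neighborSet w ⊆ insert (p w) Sw := by
        intro y hy
        simp only [SimpleGraph.mem_neighborSet, hFdef, SimpleGraph.fromRel_adj] at hy
        obtain ⟨hne, h | h⟩ := hy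
        · rcases h with ⟨_, rfl⟩ | ⟨hu, _⟩
          · exact Set.mem_insert _ _
          · exact absurd hw (Finset.mem_compl.mp hu)
        · rcases h with ⟨hc, hpy⟩ | ⟨hu, hgy⟩
          · have hy' : y = p w := by rw [← hpy]; exact (hInv y hc).symm
            exact hy' ▸ Set.mem_insert _ _
          · exact Set.mem_insert_of_mem _ ⟨hu, hgy⟩
      have hSsub : Sw.Subsingleton := by
        rintro y1 ⟨h1, e1⟩ y2 ⟨h2, e2⟩
        exact hgInj y1 y2 h1 h2 (by rw [e1, e2])
      have hS1 : Sw.ncard ≤ 1 := by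
        rcases hSsub.eq_empty_or_singleton with h | ⟨z, h⟩
        · simp [h]
        · simp [h]
      have h2le : (F.neighborSet w).ncard ≤ 2 := by
        calc (F.neighborSet w).ncard ≤ (insert (p w) Sw).ncard :=
              Set.ncard_le_ncard hsub (Set.toFinite _)
          _ ≤ Sw.ncard + 1 := Set.ncard_insert_le _ _
          _ ≤ 2 := by omega
      exact ⟨h1le, le_trans h2le hb⟩
    · have hwU : w ∈ U := Finset.mem_compl.mpr hw
      have hset : F.neighborSet w = {g w} := by
        ext y
        simp only [SimpleGraph.mem_neighborSet, Set.mem_singleton_iff, hFdef,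
          SimpleGraph.fromRel_adj]
        constructor
        · rintro ⟨hne, h | h⟩
          · rcases h with ⟨hc, _⟩ | ⟨_, rfl⟩
            · exact absurd hc hw
            · rfl
          · rcases h with ⟨hc, hpy⟩ | ⟨hu, hgy⟩
            · exact absurd (hpy ▸ hCl y hc) hw
            · exact absurd (hgy ▸ hgAdj y hu)
                (hInd y w (Finset.mem_compl.mp hu) hw)
        · rintro rfl
          exact ⟨(hgAdj w hwU).ne, Or.inl (Or.inr ⟨hwU, rfl⟩)⟩
      rw [hset, Set.ncard_singleton]
      exact ⟨le_refl 1, by omega⟩
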